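/- Let Ω ⊆ ℝⁿ be a nonempty closed convex set, F : ℝⁿ → ℝⁿ continuous and monotone on Ω and coercive with respect to Ω, and let φ : ℝⁿ → ℝ ∪ {+∞} be convex with effective domain Ω and continuous on Ω, with 0 ∈ ri(dom ∂φ − Ω), S₀ nonempty and closed, and 0 ∈ ri(dom ∂φ − S₀). Then for every ε > 0, S₀ ∩ S_{Gεφ} ⊆ S_φ. -/

import Mathlib

open Set Pointwise
open scoped InnerProductSpace

variable {V : Type*} [NormedAddCommGroup V] [NormedSpace ℝ V]

lemma mem_intrinsicInterior_iff {A : Set V} {x : V} :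
    x ∈ intrinsicInterior ℝ A ↔ x ∈ affineSpan ℝ A ∧
      ∃ δ > 0, ∀ p ∈ affineSpan ℝ A, dist p x < δ → p ∈ A := by
  constructor
  · rintro ⟨y, hy, rfl⟩
    refine ⟨y.2, ?_⟩
    obtain ⟨ε, hε, hball⟩ := Metric.mem_nhds_iff.1 (mem_interior_iff_mem_nhds.1 hy)
    exact ⟨ε, hε, fun p hp hdist => hball (show (⟨p, hp⟩ : affineSpan ℝ A) ∈ Metric.ball y ε by
      simpa [Metric.mem_ball, Subtype.dist_eq] using hdist)⟩
  · rintro ⟨hx, δ, hδ, h⟩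
    refine ⟨⟨x, hx⟩, ?_, rfl⟩
    rw [mem_interior_iff_mem_nhds, Metric.mem_nhds_iff]
    exact ⟨δ, hδ, fun q hq => h q q.2 (by simpa [Metric.mem_ball, Subtype.dist_eq] using hq)⟩

lemma combo_mem_intrinsicInterior {A : Set V} (hA : Convex ℝ A) {x y : V}
    (hx : x ∈ intrinsicInterior ℝ A) (hy : y ∈ A) {t : ℝ} (ht : 0 < t) (ht1 : t ≤ 1) :
    t • x + (1 - t) • y ∈ intrinsicInterior ℝ A := by
  rw [mem_intrinsicInterior_iff] at hx ⊢
  obtain ⟨hxs, δ, hδ, h⟩ := hx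
  have hys : y ∈ affineSpan ℝ A := subset_affineSpan ℝ A hy
  have hms : t • x + (1 - t) • y ∈ affineSpan ℝ A := by
    have : t • (x - y) ∈ (affineSpan ℝ A).direction :=
      Submodule.smul_mem _ t (AffineSubspace.vsub_mem_direction hxs hys)
    have := AffineSubspace.vadd_mem_of_mem_direction this hys
    convert this using 1
    simp [vadd_eq_add]
    module
  refine ⟨hms, t * δ, by positivity, fun p hp hdist => ?_⟩
  set m := t • x + (1 - t) • y with hm
  set q := t⁻¹ • (p - m) + x with hq
  have hqs : q ∈ affineSpan ℝ A := by
    have : t⁻¹ • (p - m) ∈ (affineSpan ℝ A).direction :=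
      Submodule.smul_mem _ _ (AffineSubspace.vsub_mem_direction hp hms)
    have := AffineSubspace.vadd_mem_of_mem_direction this hxs
    simpa [vadd_eq_add] using this
  have hqA : q ∈ A := by
    refine h q hqs ?_
    have : dist q x = ‖t⁻¹ • (p - m)‖ := by
      rw [dist_eq_norm, hq]; congr 1; abel
    rw [this, norm_smul, Real.norm_eq_abs, abs_inv, abs_of_pos ht]
    rw [dist_eq_norm] at hdist
    calc t⁻¹ * ‖p - m‖ < t⁻¹ * (t * δ) := by
          apply mul_lt_mul_of_pos_left hdist (by positivity)
      _ = δ := by field_simp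
  have : p = t • q + (1 - t) • y := by
    have ht' : t ≠ 0 := ne_of_gt ht
    rw [hq, hm, smul_add, smul_smul, mul_inv_cancel₀ ht', one_smul]
    module
  rw [this]
  exact hA hqA hy ht.le (by linarith) (by ring)

section Sep

variable {n : ℕ}
local notation "E" => EuclideanSpace ℝ (Fin n)

lemma sep_lemma (A T : Set (EuclideanSpace ℝ (Fin n)))
    (hA : Convex ℝ A) (hT : Convex ℝ T) (hTA : T ⊆ A)
    {x₀ : EuclideanSpace ℝ (Fin n)} (hx₀ : x₀ ∈ T)
    (φ : EuclideanSpace ℝ (Fin n) → ℝ) (hφ : ConvexOn ℝ A φ)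
    (hmin : ∀ z ∈ T, φ x₀ ≤ φ z)
    (L : Submodule ℝ (EuclideanSpace ℝ (Fin n)))
    (h1 : ∀ y ∈ A, ∀ z ∈ T, y - z ∈ L)
    {δ : ℝ} (hδ : 0 < δ)
    (h2 : ∀ u ∈ L, ‖u‖ < δ → ∃ y ∈ A, ∃ z ∈ T, y - z = u) :
    ∃ v : EuclideanSpace ℝ (Fin n), ∀ y ∈ A, ∀ z ∈ T, φ x₀ + ⟪v, y - z⟫_ℝ ≤ φ y := by
  classical
  set C : Set (E × ℝ) := {p | ∃ y ∈ A, ∃ z ∈ T, y - z = p.1 ∧ φ y - φ x₀ ≤ p.2} with hC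
  have hCconv : Convex ℝ C := by
    rintro p ⟨y1, hy1, z1, hz1, he1, hle1⟩ q ⟨y2, hy2, z2, hz2, he2, hle2⟩ a b ha hb hab
    refine ⟨a • y1 + b • y2, hA hy1 hy2 ha hb hab, a • z1 + b • z2, hT hz1 hz2 ha hb hab,
      ?_, ?_⟩
    · have : (a • p + b • q).1 = a • p.1 + b • q.1 := rfl
      rw [this, ← he1, ← he2]; module
    · have h3 := hφ.2 hy1 hy2 ha hb hab
      have : (a • p + b • q).2 = a * p.2 + b * q.2 := rfl
      rw [this]
      have h4 : a * (φ y1 - φ x₀) ≤ a * p.2 := mul_le_mul_of_nonneg_left hle1 ha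
      have h5 : b * (φ y2 - φ x₀) ≤ b * q.2 := mul_le_mul_of_nonneg_left hle2 hb
      have : a • φ y1 + b • φ y2 = a * φ y1 + b * φ y2 := rfl
      rw [this] at h3
      have hx : a * (φ y1 - φ x₀) + b * (φ y2 - φ x₀) = a * φ y1 + b * φ y2 - (a + b) * φ x₀ := by
        ring
      rw [hab, one_mul] at hx
      linarith
  have h00 : ((0 : E), (0 : ℝ)) ∈ C := ⟨x₀, hTA hx₀, x₀, hx₀, by simp, by simp⟩
  have h01 : ((0 : E), (1 : ℝ)) ∈ C := ⟨x₀, hTA hx₀, x₀, hx₀, by simp, by norm_num⟩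
  have hCU : ∀ p ∈ C, p ∈ (affineSpan ℝ C).direction := fun p hp => by
    simpa [vsub_eq_sub, Prod.mk_zero_zero] using
      AffineSubspace.vsub_mem_direction (subset_affineSpan ℝ C hp) (subset_affineSpan ℝ C h00)
  set U : Submodule ℝ (E × ℝ) := (affineSpan ℝ C).direction with hU
  have h01U : ((0 : E), (1 : ℝ)) ∈ U := hCU _ h01
  obtain ⟨U', hcompl⟩ := Submodule.exists_isCompl U
  obtain ⟨p₀, hp₀⟩ := Set.Nonempty.intrinsicInterior hCconv ⟨_, h00⟩
  have hp₀C : p₀ ∈ C := intrinsicInterior_subset hp₀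
  have hp₀U : p₀ ∈ U := hCU _ hp₀C
  rw [mem_intrinsicInterior_iff] at hp₀
  obtain ⟨hp₀s, δ₀, hδ₀, hball⟩ := hp₀
  -- the projection onto U along U'
  set π : (E × ℝ) →ₗ[ℝ] (E × ℝ) := U.subtype.comp (U.projectionOnto U' hcompl) with hπ
  have hπcont : Continuous π := π.continuous_of_finiteDimensional
  have hπU : ∀ q, π q ∈ U := fun q => (U.projectionOnto U' hcompl q).2
  have hπleft : ∀ q ∈ U, π q = q := fun q hq => by
    have := Submodule.projectionOnto_apply_left hcompl ⟨q, hq⟩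
    simp only [hπ, LinearMap.comp_apply, Submodule.subtype_apply]
    rw [this]
  have hπright : ∀ q, q - π q ∈ U' := by
    intro q
    have hq : q ∈ U ⊔ U' := by rw [hcompl.sup_eq_top]; trivial
    obtain ⟨u, hu, u', hu', rfl⟩ := Submodule.mem_sup.1 hq
    have : π (u + u') = u := by
      rw [map_add, hπleft u hu]
      have : π u' = 0 := by
        simp only [hπ, LinearMap.comp_apply, Submodule.subtype_apply]
        rw [Submodule.projectionOnto_apply_right hcompl ⟨u', hu'⟩]; rfl
      rw [this, add_zero]
    rw [this]; simpa using hu'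
  set Vb : Set (E × ℝ) := ↑U' ∩ Metric.ball 0 1 with hVb
  set C' : Set (E × ℝ) := C + Vb with hC'
  have hCC' : C ⊆ C' := fun c hc =>
    ⟨c, hc, 0, ⟨U'.zero_mem, by simp⟩, add_zero c⟩
  have hC'conv : Convex ℝ C' := hCconv.add ((U'.convex).inter (convex_ball 0 1))
  -- p₀ is an interior point of C'
  have hp₀int : p₀ ∈ interior C' := by
    have hcont : ContinuousAt π p₀ := hπcont.continuousAt
    rw [Metric.continuousAt_iff] at hcont
    obtain ⟨r, hr, hrr⟩ := hcont (min δ₀ (1/2)) (by positivity)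
    rw [mem_interior_iff_mem_nhds]
    refine Filter.mem_of_superset (Metric.ball_mem_nhds p₀ (show (0:ℝ) < min r (1/2) by positivity)) ?_
    intro q hq
    have hq1 : dist q p₀ < r := lt_of_lt_of_le hq (min_le_left _ _)
    have hq2 : dist q p₀ < 1/2 := lt_of_lt_of_le hq (min_le_right _ _)
    have hπq := hrr hq1
    rw [hπleft p₀ hp₀U] at hπq
    have hc1 : dist (π q) p₀ < δ₀ := lt_of_lt_of_le hπq (min_le_left _ _)
    have hc2 : dist (π q) p₀ < 1/2 := lt_of_lt_of_le hπq (min_le_right _ _)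
    have hπqs : π q ∈ affineSpan ℝ C := by
      have := AffineSubspace.vadd_mem_of_mem_direction (hπU q) (subset_affineSpan ℝ C h00)
      simpa [vadd_eq_add, Prod.mk_zero_zero] using this
    have hπqC : π q ∈ C := hball _ hπqs hc1
    refine ⟨π q, hπqC, q - π q, ⟨hπright q, ?_⟩, by
      show π q + (q - π q) = q; abel⟩
    rw [Metric.mem_ball, dist_zero_right]
    have : q - π q = (q - p₀) - (π q - p₀) := by abel
    rw [this]
    calc ‖(q - p₀) - (π q - p₀)‖ ≤ ‖q - p₀‖ + ‖π q - p₀‖ := norm_sub_le _ _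
      _ < 1/2 + 1/2 := by
          rw [← dist_eq_norm, ← dist_eq_norm]; exact add_lt_add hq2 hc2
      _ = 1 := by norm_num
  -- (0,0) is not an interior point of C'
  have h00not : ((0 : E), (0 : ℝ)) ∉ interior C' := by
    intro h
    obtain ⟨η, hη, hbsub⟩ := Metric.mem_nhds_iff.1 (mem_interior_iff_mem_nhds.1 h)
    have hpmem : ((0 : E), -η/2) ∈ C' := by
      apply hbsub
      simp only [Metric.mem_ball, Prod.dist_eq, dist_self, Real.dist_eq, sub_zero]
      rw [abs_of_nonpos (by linarith : -η/2 ≤ 0), max_lt_iff]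
      constructor <;> linarith
    obtain ⟨c, hc, b, hb, hcb⟩ := hpmem
    have hcb' : c + b = ((0 : E), -η/2) := hcb
    have hpU : ((0 : E), -η/2) ∈ U := by
      have : ((0 : E), -η/2) = (-η/2) • ((0 : E), (1 : ℝ)) := by
        simp [Prod.smul_def]
      rw [this]; exact U.smul_mem _ h01U
    have hbU : b ∈ U := by
      have : b = ((0 : E), -η/2) - c := by rw [← hcb']; abel
      rw [this]; exact U.sub_mem hpU (hCU _ hc)
    have hb0 : b = 0 := by
      have : b ∈ U ⊓ U' := Submodule.mem_inf.2 ⟨hbU, hb.1⟩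
      rwa [hcompl.inf_eq_bot, Submodule.mem_bot] at this
    rw [hb0, add_zero] at hcb'
    rw [hcb'] at hc
    obtain ⟨y, hy, z, hz, he, hle⟩ := hc
    have : y = z := by
      have : y - z = 0 := he
      exact sub_eq_zero.1 this
    rw [this] at hle
    have := hmin z hz
    simp only at hle
    linarith
  obtain ⟨f, hf⟩ := geometric_hahn_banach_open_point (hC'conv.interior) isOpen_interior h00not
  have hf0 : f ((0 : E), (0 : ℝ)) = 0 := by
    have : ((0 : E), (0 : ℝ)) = (0 : E × ℝ) := rfl
    rw [this, map_zero]
  have hfneg : ∀ p ∈ interior C', f p < 0 := fun p hp => by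
    have := hf p hp; rwa [hf0] at this
  -- f ≤ 0 on C'
  have hfC' : ∀ p ∈ C', f p ≤ 0 := by
    intro p hp
    have hcombo : ∀ a ∈ Ioc (0:ℝ) 1, f (a • p₀ + (1 - a) • p) ≤ 0 := by
      intro a ha
      exact (hfneg _ (hC'conv.combo_interior_self_mem_interior hp₀int hp ha.1
        (by linarith [ha.2]) (by ring))).le
    have hcont : Filter.Tendsto (fun a : ℝ => f (a • p₀ + (1 - a) • p)) (nhdsWithin 0 (Ioi 0))
        (nhds (f ((0:ℝ) • p₀ + (1 - (0:ℝ)) • p))) := by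
      apply Filter.Tendsto.mono_left _ nhdsWithin_le_nhds
      exact (f.continuous.comp ((continuous_id.smul continuous_const).add
        ((continuous_const.sub continuous_id).smul continuous_const))).tendsto 0
    have hval : ((0:ℝ) • p₀ + (1 - (0:ℝ)) • p) = p := by simp
    rw [hval] at hcont
    refine le_of_tendsto hcont ?_
    exact Filter.mem_of_superset (Ioc_mem_nhdsGT zero_lt_one) hcombo
  have hfC : ∀ p ∈ C, f p ≤ 0 := fun p hp => hfC' p (hCC' hp)
  set s : ℝ := f ((0 : E), (1 : ℝ)) with hs
  have hsle : s ≤ 0 := hfC _ h01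
  have hsplit : ∀ (w : E) (t : ℝ), f (w, t) = f (w, 0) + t * s := by
    intro w t
    have : ((w, t) : E × ℝ) = (w, (0:ℝ)) + t • ((0 : E), (1 : ℝ)) := by
      simp [Prod.ext_iff]
    rw [this, map_add, map_smul, smul_eq_mul]
  have hsne : s ≠ 0 := by
    intro hs0
    have hL : ∀ u ∈ L, f ((u, 0) : E × ℝ) = 0 := by
      have hsmall : ∀ u ∈ L, ‖u‖ < δ → f ((u, 0) : E × ℝ) ≤ 0 := by
        intro u hu hun
        obtain ⟨y, hy, z, hz, hyz⟩ := h2 u hu hun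
        have : ((u, φ y - φ x₀) : E × ℝ) ∈ C := ⟨y, hy, z, hz, hyz, le_refl _⟩
        have := hfC _ this
        rw [hsplit, hs0, mul_zero, add_zero] at this
        exact this
      have hsmall0 : ∀ u ∈ L, ‖u‖ < δ → f ((u, 0) : E × ℝ) = 0 := by
        intro u hu hun
        have h1' := hsmall u hu hun
        have h2' := hsmall (-u) (L.neg_mem hu) (by rwa [norm_neg])
        have : ((-u, (0:ℝ)) : E × ℝ) = -((u, 0) : E × ℝ) := by simp [Prod.ext_iff]
        rw [this, map_neg] at h2'
        linarith
      intro u hu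
      rcases eq_or_ne u 0 with rfl | hu0
      · have : (((0:E), (0:ℝ)) : E × ℝ) = (0 : E × ℝ) := rfl
        rw [this, map_zero]
      · have hpos : 0 < ‖u‖ := norm_pos_iff.2 hu0
        set c : ℝ := δ / (2 * ‖u‖) with hc'
        have hcpos : 0 < c := by positivity
        have hcn : ‖c • u‖ < δ := by
          rw [norm_smul, Real.norm_eq_abs, abs_of_pos hcpos, hc']
          rw [div_mul_eq_mul_div, mul_comm]
          rw [div_lt_iff₀ (by positivity)]
          nlinarith
        have := hsmall0 (c • u) (L.smul_mem c hu) hcn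
        have hsm : ((c • u, (0:ℝ)) : E × ℝ) = c • ((u, 0) : E × ℝ) := by
          simp [Prod.smul_def]
        rw [hsm, map_smul, smul_eq_mul] at this
        exact (mul_eq_zero.1 this).resolve_left (ne_of_gt hcpos)
    have hUL : (U : Set (E × ℝ)) ⊆ ↑(L.prod (⊤ : Submodule ℝ ℝ)) := by
      rw [hU, direction_affineSpan]
      have : vectorSpan ℝ C ≤ L.prod ⊤ := by
        rw [vectorSpan_def]
        apply Submodule.span_le.2
        rintro w ⟨p, hp, q, hq, rfl⟩
        obtain ⟨y1, hy1, z1, hz1, he1, _⟩ := hp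
        obtain ⟨y2, hy2, z2, hz2, he2, _⟩ := hq
        refine Submodule.mem_prod.2 ⟨?_, trivial⟩
        have : (p -ᵥ q).1 = p.1 - q.1 := rfl
        rw [this, ← he1, ← he2]
        exact L.sub_mem (h1 y1 hy1 z1 hz1) (h1 y2 hy2 z2 hz2)
      exact this
    have hfU : ∀ w ∈ U, f w = 0 := by
      intro w hw
      have hw1 : w.1 ∈ L := (Submodule.mem_prod.1 (hUL hw)).1
      have : w = (w.1, w.2) := rfl
      rw [this, hsplit, hL _ hw1, hs0, mul_zero, add_zero]
    have := hfneg p₀ hp₀int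
    rw [hfU p₀ hp₀U] at this
    exact lt_irrefl 0 this
  have hslt : s < 0 := lt_of_le_of_ne hsle hsne
  -- construct v
  set ℓ : EuclideanSpace ℝ (Fin n) →L[ℝ] ℝ := f.comp (ContinuousLinearMap.inl ℝ E ℝ) with hℓ
  set v : EuclideanSpace ℝ (Fin n) :=
    (-s)⁻¹ • (InnerProductSpace.toDual ℝ (EuclideanSpace ℝ (Fin n))).symm ℓ with hv
  refine ⟨v, ?_⟩
  intro y hy z hz
  have hmem : ((y - z, φ y - φ x₀) : E × ℝ) ∈ C := ⟨y, hy, z, hz, rfl, le_refl _⟩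
  have hle := hfC _ hmem
  rw [hsplit] at hle
  have hinner : ⟪v, y - z⟫_ℝ = (-s)⁻¹ * f ((y - z, 0) : E × ℝ) := by
    rw [hv, real_inner_smul_left, InnerProductSpace.toDual_symm_apply]
    congr 1
  have hspos : 0 < -s := by linarith
  have key : f ((y - z, 0) : E × ℝ) ≤ (φ y - φ x₀) * (-s) := by nlinarith
  have : ⟪v, y - z⟫_ℝ ≤ φ y - φ x₀ := by
    rw [hinner]
    calc (-s)⁻¹ * f ((y - z, 0) : E × ℝ) ≤ (-s)⁻¹ * ((φ y - φ x₀) * (-s)) :=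
          mul_le_mul_of_nonneg_left key (by positivity)
      _ = φ y - φ x₀ := by field_simp
  linarith

end Sep


/-- The dual gap function `G(x) = sup_{y ∈ Ω} ⟨F(y), x − y⟩`, valued in `EReal`. -/
noncomputable def dualGap {n : ℕ} (Ω : Set (EuclideanSpace ℝ (Fin n)))
    (F : EuclideanSpace ℝ (Fin n) → EuclideanSpace ℝ (Fin n))
    (x : EuclideanSpace ℝ (Fin n)) : EReal :=
  ⨆ y ∈ Ω, ((⟪F y, x - y⟫_ℝ : ℝ) : EReal)

/-- The (convex) subdifferential of φ (viewed as the extended function equal to φ on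
Ω and +∞ outside of Ω, so that its effective domain is Ω). -/
def subdiffOn {n : ℕ} (Ω : Set (EuclideanSpace ℝ (Fin n)))
    (φ : EuclideanSpace ℝ (Fin n) → ℝ) (x : EuclideanSpace ℝ (Fin n)) :
    Set (EuclideanSpace ℝ (Fin n)) :=
  {v | x ∈ Ω ∧ ∀ y ∈ Ω, φ x + ⟪v, y - x⟫_ℝ ≤ φ y}

section Aux
variable {n : ℕ}
local notation "E" => EuclideanSpace ℝ (Fin n)

lemma minty_back (Ω : Set (EuclideanSpace ℝ (Fin n))) (hconv : Convex ℝ Ω)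
    (F : EuclideanSpace ℝ (Fin n) → EuclideanSpace ℝ (Fin n)) (hFcont : ContinuousOn F Ω)
    {x : EuclideanSpace ℝ (Fin n)} (hx : x ∈ Ω)
    (h : ∀ w ∈ Ω, 0 ≤ ⟪F w, w - x⟫_ℝ) : ∀ y ∈ Ω, 0 ≤ ⟪F x, y - x⟫_ℝ := by
  intro y hy
  have key : ∀ t ∈ Ioc (0:ℝ) 1, 0 ≤ ⟪F (x + t • (y - x)), y - x⟫_ℝ := by
    intro t ht
    have hw : x + t • (y - x) ∈ Ω := hconv.add_smul_sub_mem hx hy ⟨ht.1.le, ht.2⟩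
    have h' := h _ hw
    have he : (x + t • (y - x)) - x = t • (y - x) := by abel
    rw [he, real_inner_smul_right] at h'
    by_contra hneg
    push_neg at hneg
    nlinarith [mul_neg_of_pos_of_neg ht.1 hneg]
  have htend : Filter.Tendsto (fun t : ℝ => ⟪F (x + t • (y - x)), y - x⟫_ℝ)
      (nhdsWithin 0 (Ioi 0)) (nhds ⟪F x, y - x⟫_ℝ) := by
    have hgt : Filter.Tendsto (fun t : ℝ => x + t • (y - x)) (nhdsWithin 0 (Ioi 0))
        (nhdsWithin x Ω) := by
      rw [tendsto_nhdsWithin_iff]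
      constructor
      · have hc : Continuous fun t : ℝ => x + t • (y - x) :=
          continuous_const.add (continuous_id.smul continuous_const)
        have h0 : x + (0:ℝ) • (y - x) = x := by simp
        have := (hc.tendsto 0).mono_left (nhdsWithin_le_nhds (s := Ioi (0:ℝ)))
        rwa [h0] at this
      · filter_upwards [Ioc_mem_nhdsGT zero_lt_one] with t ht
        exact hconv.add_smul_sub_mem hx hy ⟨ht.1.le, ht.2⟩
    have hF : Filter.Tendsto F (nhdsWithin x Ω) (nhds (F x)) := hFcont x hx
    exact (hF.comp hgt).inner tendsto_const_nhds
  refine ge_of_tendsto htend ?_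
  filter_upwards [Ioc_mem_nhdsGT zero_lt_one] with t ht using key t ht

lemma minty_fwd (Ω : Set (EuclideanSpace ℝ (Fin n)))
    (F : EuclideanSpace ℝ (Fin n) → EuclideanSpace ℝ (Fin n))
    (hFmono : ∀ x ∈ Ω, ∀ y ∈ Ω, 0 ≤ ⟪F x - F y, x - y⟫_ℝ)
    {x : EuclideanSpace ℝ (Fin n)} (hx : x ∈ Ω) (hS : ∀ y ∈ Ω, 0 ≤ ⟪F x, y - x⟫_ℝ) :
    ∀ w ∈ Ω, 0 ≤ ⟪F w, w - x⟫_ℝ := by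
  intro w hw
  have h1 := hFmono w hw x hx
  have h2 := hS w hw
  rw [inner_sub_left] at h1
  have : ⟪F x, w - x⟫_ℝ ≤ ⟪F w, w - x⟫_ℝ := by linarith
  linarith

lemma dualGap_eq_zero (Ω : Set (EuclideanSpace ℝ (Fin n)))
    (F : EuclideanSpace ℝ (Fin n) → EuclideanSpace ℝ (Fin n))
    (hFmono : ∀ x ∈ Ω, ∀ y ∈ Ω, 0 ≤ ⟪F x - F y, x - y⟫_ℝ)
    {x : EuclideanSpace ℝ (Fin n)} (hx : x ∈ Ω) (hS : ∀ y ∈ Ω, 0 ≤ ⟪F x, y - x⟫_ℝ) :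
    dualGap Ω F x = 0 := by
  apply le_antisymm
  · apply iSup₂_le
    intro y hy
    have h1 := hFmono x hx y hy
    have h2 := hS y hy
    rw [inner_sub_left] at h1
    have e2 : ⟪F x, x - y⟫_ℝ = -⟪F x, y - x⟫_ℝ := by
      rw [← inner_neg_right]
      congr 1
      abel
    have : ⟪F y, x - y⟫_ℝ ≤ 0 := by linarith
    exact_mod_cast this
  · have h0 := le_iSup₂ (f := fun (y : EuclideanSpace ℝ (Fin n)) (_ : y ∈ Ω) =>
      ((⟪F y, x - y⟫_ℝ : ℝ) : EReal)) x hx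
    simpa [dualGap, sub_self, inner_zero_right] using h0

end Aux

/-- for every ε > 0 one has S₀ ∩ S_{Gεφ} ⊆ S_φ. -/
theorem S0_inter_SGeps_subset_Sphi {n : ℕ}
    (Ω : Set (EuclideanSpace ℝ (Fin n)))
    (hne : Ω.Nonempty) (hcl : IsClosed Ω) (hconv : Convex ℝ Ω)
    (F : EuclideanSpace ℝ (Fin n) → EuclideanSpace ℝ (Fin n))
    (hFcont : ContinuousOn F Ω)
    (hFmono : ∀ x ∈ Ω, ∀ y ∈ Ω, 0 ≤ ⟪F x - F y, x - y⟫_ℝ)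
    (hcoer : ∃ γ : ℝ, 0 < γ ∧ ∀ x₀ ∈ Ω, ∃ c : ℝ, 0 < c ∧ ∃ R : ℝ,
      ∀ x ∈ Ω, R ≤ ‖x‖ → c ≤ ⟪F x, x - x₀⟫_ℝ / ‖x‖ ^ γ)
    (φ : EuclideanSpace ℝ (Fin n) → ℝ)
    (hφconv : ConvexOn ℝ Ω φ) (hφcont : ContinuousOn φ Ω)
    (hri : (0 : EuclideanSpace ℝ (Fin n)) ∈
      intrinsicInterior ℝ ({x | (subdiffOn Ω φ x).Nonempty} - Ω))
    (hS0ne : ({x | x ∈ Ω ∧ ∀ y ∈ Ω, 0 ≤ ⟪F x, y - x⟫_ℝ}).Nonempty)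
    (hS0cl : IsClosed {x : (EuclideanSpace ℝ (Fin n)) |
      x ∈ Ω ∧ ∀ y ∈ Ω, 0 ≤ ⟪F x, y - x⟫_ℝ})
    (hriS0 : (0 : EuclideanSpace ℝ (Fin n)) ∈
      intrinsicInterior ℝ ({x | (subdiffOn Ω φ x).Nonempty} -
        {x | x ∈ Ω ∧ ∀ y ∈ Ω, 0 ≤ ⟪F x, y - x⟫_ℝ})) :
    ∀ ε : ℝ, 0 < ε →
      ({x | x ∈ Ω ∧ ∀ y ∈ Ω, 0 ≤ ⟪F x, y - x⟫_ℝ} ∩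
        {x | x ∈ Ω ∧ ∀ z ∈ Ω, dualGap Ω F x + ((ε * φ x : ℝ) : EReal) ≤
          dualGap Ω F z + ((ε * φ z : ℝ) : EReal)}) ⊆
      {x | (x ∈ Ω ∧ ∀ y ∈ Ω, 0 ≤ ⟪F x, y - x⟫_ℝ) ∧
        ∃ v ∈ subdiffOn Ω φ x,
          ∀ z, (z ∈ Ω ∧ ∀ y ∈ Ω, 0 ≤ ⟪F z, y - z⟫_ℝ) → 0 ≤ ⟪v, z - x⟫_ℝ} := by
  intro ε hε x hx
  set S : Set (EuclideanSpace ℝ (Fin n)) := {x | x ∈ Ω ∧ ∀ y ∈ Ω, 0 ≤ ⟪F x, y - x⟫_ℝ} with hSdef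
  set D : Set (EuclideanSpace ℝ (Fin n)) := {x | (subdiffOn Ω φ x).Nonempty} with hDdef
  have hxS : x ∈ S := hx.1
  have hxΩ : x ∈ Ω := hxS.1
  have hDsub : D ⊆ Ω := fun d hd => hd.choose_spec.1
  -- S is convex
  have hSconv : Convex ℝ S := by
    intro x1 hx1 x2 hx2 a b ha hb hab
    have hmΩ : a • x1 + b • x2 ∈ Ω := hconv hx1.1 hx2.1 ha hb hab
    refine ⟨hmΩ, minty_back Ω hconv F hFcont hmΩ ?_⟩
    intro w hw
    have m1 := minty_fwd Ω F hFmono hx1.1 hx1.2 w hw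
    have m2 := minty_fwd Ω F hFmono hx2.1 hx2.2 w hw
    have he : w - (a • x1 + b • x2) = a • (w - x1) + b • (w - x2) := by
      have hw1 : w = (a + b) • w := by rw [hab, one_smul]
      calc w - (a • x1 + b • x2) = (a + b) • w - (a • x1 + b • x2) := by rw [← hw1]
        _ = a • (w - x1) + b • (w - x2) := by module
    rw [he, inner_add_right, real_inner_smul_right, real_inner_smul_right]
    have hm1 := mul_nonneg ha m1
    have hm2 := mul_nonneg hb m2
    linarith
  -- φ is minimal at x over S
  have hgapx : dualGap Ω F x = 0 := dualGap_eq_zero Ω F hFmono hxΩ hxS.2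
  have hφmin : ∀ z ∈ S, φ x ≤ φ z := by
    intro z hz
    have h1 := hx.2.2 z hz.1
    rw [hgapx, dualGap_eq_zero Ω F hFmono hz.1 hz.2, zero_add, zero_add] at h1
    have h2 : ε * φ x ≤ ε * φ z := by exact_mod_cast h1
    exact (mul_le_mul_iff_right₀ hε).1 h2
  -- every intrinsic interior point of Ω admits a subgradient
  have lemA : ∀ w ∈ intrinsicInterior ℝ Ω, w ∈ D := by
    intro w hw
    have hwΩ : w ∈ Ω := intrinsicInterior_subset hw
    rw [mem_intrinsicInterior_iff] at hw
    obtain ⟨hws, δ₁, hδ₁, hball₁⟩ := hw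
    obtain ⟨v, hv⟩ := sep_lemma Ω {w} hconv (convex_singleton w)
      (Set.singleton_subset_iff.2 hwΩ) (Set.mem_singleton w) φ hφconv
      (fun z hz => by rw [Set.mem_singleton_iff.1 hz])
      ((affineSpan ℝ Ω).direction)
      (fun y hy z hz => by
        rw [Set.mem_singleton_iff.1 hz]
        simpa [vsub_eq_sub] using
          AffineSubspace.vsub_mem_direction (subset_affineSpan ℝ Ω hy)
            (subset_affineSpan ℝ Ω hwΩ))
      hδ₁
      (fun u hu hun => by
        refine ⟨u + w, ?_, w, Set.mem_singleton w, by abel⟩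
        refine hball₁ _ ?_ ?_
        · have := AffineSubspace.vadd_mem_of_mem_direction hu (subset_affineSpan ℝ Ω hwΩ)
          simpa [vadd_eq_add] using this
        · rw [dist_eq_norm]
          simpa using hun)
    exact ⟨v, hwΩ, fun y hy => hv y hy w (Set.mem_singleton w)⟩
  -- extraction from the relative interior hypothesis
  have h0DS : (0 : EuclideanSpace ℝ (Fin n)) ∈ D - S := intrinsicInterior_subset hriS0
  rw [mem_intrinsicInterior_iff] at hriS0
  obtain ⟨h0span, δ₂, hδ₂, hball₂⟩ := hriS0
  set L : Submodule ℝ (EuclideanSpace ℝ (Fin n)) := Submodule.span ℝ (D - S) with hLdef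
  have hLle : L ≤ (affineSpan ℝ (D - S)).direction := by
    rw [direction_affineSpan, vectorSpan_def]
    apply Submodule.span_le.2
    intro d hd
    exact Submodule.subset_span ⟨d, hd, 0, h0DS, by simp [vsub_eq_sub]⟩
  have h2sep : ∀ u ∈ L, ‖u‖ < δ₂ → ∃ y ∈ Ω, ∃ z ∈ S, y - z = u := by
    intro u hu hun
    have huspan : u ∈ affineSpan ℝ (D - S) := by
      have := AffineSubspace.vadd_mem_of_mem_direction (hLle hu) h0span
      simpa [vadd_eq_add] using this
    have huDS : u ∈ D - S := hball₂ u huspan (by simpa [dist_zero_right] using hun)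
    rw [Set.mem_sub] at huDS
    obtain ⟨d, hd, z, hz, hdz⟩ := huDS
    exact ⟨d, hDsub hd, z, hz, hdz⟩
  -- Ω - S ⊆ L
  have h1sep : ∀ y ∈ Ω, ∀ z ∈ S, y - z ∈ L := by
    obtain ⟨x₀', hx₀'⟩ := Set.Nonempty.intrinsicInterior hconv hne
    intro y hy z hz
    have hyk : ∀ k : ℕ, ((1:ℝ)/(k+1)) • x₀' + (1 - (1:ℝ)/(k+1)) • y ∈ D := by
      intro k
      apply lemA
      apply combo_mem_intrinsicInterior hconv hx₀' hy
      · positivity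
      · rw [div_le_one (by positivity)]
        have : (0:ℝ) ≤ (k : ℝ) := Nat.cast_nonneg k
        linarith
    have hmem : ∀ k : ℕ, ((1:ℝ)/(k+1)) • x₀' + (1 - (1:ℝ)/(k+1)) • y - z ∈ (L : Set (EuclideanSpace ℝ (Fin n))) := by
      intro k
      exact Submodule.subset_span ⟨_, hyk k, z, hz, rfl⟩
    have htends : Filter.Tendsto (fun k : ℕ => ((1:ℝ)/(k+1)) • x₀' + (1 - (1:ℝ)/(k+1)) • y - z)
        Filter.atTop (nhds (y - z)) := by
      have h0 : Filter.Tendsto (fun k : ℕ => (1:ℝ)/(k+1)) Filter.atTop (nhds 0) :=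
        tendsto_one_div_add_atTop_nhds_zero_nat
      have := ((h0.smul_const x₀').add (((tendsto_const_nhds (x := (1:ℝ))).sub h0).smul_const y)).sub_const z
      simpa using this
    have hclosed : IsClosed (L : Set (EuclideanSpace ℝ (Fin n))) :=
      Submodule.closed_of_finiteDimensional L
    exact hclosed.mem_of_tendsto htends (Filter.Eventually.of_forall hmem)
  obtain ⟨v, hv⟩ := sep_lemma Ω S hconv hSconv (fun z hz => hz.1) hxS φ hφconv hφmin
    L h1sep hδ₂ h2sep
  refine ⟨hxS, v, ⟨hxΩ, fun y hy => hv y hy x hxS⟩, fun z hz => ?_⟩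
  have h := hv x hxΩ z hz
  have h2 : ⟪v, x - z⟫_ℝ ≤ 0 := by linarith
  have hneg : ⟪v, z - x⟫_ℝ = -⟪v, x - z⟫_ℝ := by
    rw [← inner_neg_right]
    congr 1
    abel
  rw [hneg]
  linarith
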